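/- Under the assumptions of the previous context, M := A − λ̲ C is elliptic on V₀ := {x ∈ H : ⟨x, u⟩ = 0}: there exist θ, Θ > 0 such that θ‖x‖² ≤ ⟨M x, x⟩ ≤ Θ‖x‖² for all x ∈ V₀. -/

import Mathlib

open scoped RealInnerProductSpace

/-- `M = A - λ̲ C` is bounded and elliptic on `V₀ = {x : ⟨x, u⟩ = 0}`:
there exist `θ, Θ > 0` with `θ‖x‖² ≤ ⟨M x, x⟩ ≤ Θ‖x‖²` for all `x ∈ V₀`. -/
theorem stmt3 {H : Type*} [NormedAddCommGroup H] [InnerProductSpace ℝ H] [CompleteSpace H]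
    (A C : H →L[ℝ] H)
    (hAsymm : ∀ x y, ⟪A x, y⟫ = ⟪x, A y⟫) (hCsymm : ∀ x y, ⟪C x, y⟫ = ⟪x, C y⟫)
    (hCpos : ∀ x, x ≠ 0 → 0 < ⟪C x, x⟫)
    (γ Γ : ℝ) (hγ : 0 < γ)
    (hA : ∀ x, γ * ‖x‖ ^ 2 ≤ ⟪A x, x⟫ ∧ ⟪A x, x⟫ ≤ Γ * ‖x‖ ^ 2)
    (lam : ℝ) (hlam : 0 < lam) (u : H) (hu : u ≠ 0) (heig : A u = lam • C u)
    (hmin : ∀ x, x ≠ 0 → lam ≤ ⟪A x, x⟫ / ⟪C x, x⟫)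
    (Λ : ℝ) (hΛ : lam < Λ)
    (hgap : ∀ x, x ≠ 0 → ⟪A u, x⟫ = 0 → Λ ≤ ⟪A x, x⟫ / ⟪C x, x⟫) :
    ∃ θ Θ : ℝ, 0 < θ ∧ 0 < Θ ∧
      ∀ x, ⟪x, u⟫ = 0 →
        θ * ‖x‖ ^ 2 ≤ ⟪A x - lam • C x, x⟫ ∧ ⟪A x - lam • C x, x⟫ ≤ Θ * ‖x‖ ^ 2 := by
  have hΛ0 : 0 < Λ := hlam.trans hΛ
  have hcoef : 0 < 1 - lam / Λ := by
    have : lam / Λ < 1 := (div_lt_one hΛ0).mpr hΛ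
    linarith
  have hu2 : 0 < ‖u‖ ^ 2 := pow_pos (norm_pos_iff.mpr hu) 2
  have hΓ : 0 < Γ := by
    have h := hA u
    nlinarith [h.1, h.2]
  refine ⟨γ * (1 - lam / Λ) / 4, Γ, by positivity, hΓ, ?_⟩
  intro x hxu
  have hCx : 0 ≤ ⟪C x, x⟫ := by
    by_cases hx : x = 0
    · simp [hx]
    · exact (hCpos x hx).le
  constructor
  · -- lower bound
    by_cases hx : x = 0
    · simp [hx]
    · have hCuu : 0 < ⟪C u, u⟫ := hCpos u hu
      have hAuu : ⟪A u, u⟫ = lam * ⟪C u, u⟫ := by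
        rw [heig, real_inner_smul_left]
      have hAuu0 : ⟪A u, u⟫ ≠ 0 := by rw [hAuu]; positivity
      set α : ℝ := ⟪A u, x⟫ / ⟪A u, u⟫ with hα
      set w : H := x - α • u with hw
      have hxdecomp : x = w + α • u := by rw [hw]; abel
      have hAuw : ⟪A u, w⟫ = 0 := by
        rw [hw, inner_sub_right, real_inner_smul_right, hα]
        field_simp; ring
      -- M x = M w
      have hMeq : A x - lam • C x = A w - lam • C w := by
        have h1 : A (α • u) = lam • C (α • u) := by
          rw [map_smul, map_smul, heig, smul_comm]
        calc A x - lam • C x = A (w + α • u) - lam • C (w + α • u) := by rw [← hxdecomp]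
          _ = (A w - lam • C w) + (A (α • u) - lam • C (α • u)) := by
              rw [map_add, map_add, smul_add]; abel
          _ = A w - lam • C w := by rw [h1]; abel
      -- ⟨M w, u⟩ = 0
      have hMwu : ⟪A w - lam • C w, u⟫ = 0 := by
        rw [inner_sub_left, real_inner_smul_left, hAsymm, hCsymm, heig,
          real_inner_smul_right]
        ring
      have hQ : ⟪A x - lam • C x, x⟫ = ⟪A w, w⟫ - lam * ⟪C w, w⟫ := by
        rw [hMeq, hxdecomp, inner_add_right, real_inner_smul_right, hMwu,
          inner_sub_left, real_inner_smul_left]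
        ring
      by_cases hw0 : w = 0
      · exfalso
        apply hx
        have hx' : x = α • u := by rw [hxdecomp, hw0, zero_add]
        have : α * ‖u‖ ^ 2 = 0 := by
          have := hxu
          rw [hx', real_inner_smul_left, real_inner_self_eq_norm_sq] at this
          linarith
        have hα0 : α = 0 := by
          rcases mul_eq_zero.mp this with h | h
          · exact h
          · exact absurd h (ne_of_gt hu2)
        rw [hx', hα0, zero_smul]
      · -- gap on w
        have hCw : 0 < ⟪C w, w⟫ := hCpos w hw0
        have hgapw : Λ * ⟪C w, w⟫ ≤ ⟪A w, w⟫ := by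
          have := hgap w hw0 hAuw
          calc Λ * ⟪C w, w⟫ ≤ (⟪A w, w⟫ / ⟪C w, w⟫) * ⟪C w, w⟫ :=
                mul_le_mul_of_nonneg_right this hCw.le
            _ = ⟪A w, w⟫ := by field_simp
        have hAw : γ * ‖w‖ ^ 2 ≤ ⟪A w, w⟫ := (hA w).1
        have hlow : (1 - lam / Λ) * ⟪A w, w⟫ ≤ ⟪A w, w⟫ - lam * ⟪C w, w⟫ := by
          have h1 : lam * ⟪C w, w⟫ ≤ (lam / Λ) * ⟪A w, w⟫ := by
            rw [div_mul_eq_mul_div, le_div_iff₀ hΛ0]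
            nlinarith
          linarith
        -- ‖x‖ ≤ 2‖w‖
        have hwu : ⟪w, u⟫ = -(α * ‖u‖ ^ 2) := by
          have : ⟪w, u⟫ + α * ‖u‖ ^ 2 = 0 := by
            have := hxu
            rw [hxdecomp, inner_add_left, real_inner_smul_left,
              real_inner_self_eq_norm_sq] at this
            linarith
          linarith
        have hαbound : |α| * ‖u‖ ≤ ‖w‖ := by
          have hcs := abs_real_inner_le_norm w u
          rw [hwu, abs_neg, abs_mul, abs_of_nonneg (sq_nonneg ‖u‖ : (0:ℝ) ≤ ‖u‖ ^ 2)] at hcs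
          have hun : 0 < ‖u‖ := norm_pos_iff.mpr hu
          nlinarith
        have hxle : ‖x‖ ≤ 2 * ‖w‖ := by
          calc ‖x‖ = ‖w + α • u‖ := by rw [← hxdecomp]
            _ ≤ ‖w‖ + ‖α • u‖ := norm_add_le _ _
            _ = ‖w‖ + |α| * ‖u‖ := by rw [norm_smul, Real.norm_eq_abs]
            _ ≤ 2 * ‖w‖ := by linarith
        have hx2 : ‖x‖ ^ 2 ≤ 4 * ‖w‖ ^ 2 := by nlinarith [norm_nonneg x, norm_nonneg w]
        rw [hQ]
        have hAwpos : 0 ≤ ⟪A w, w⟫ := le_trans (by positivity) hAw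
        calc γ * (1 - lam / Λ) / 4 * ‖x‖ ^ 2
            ≤ γ * (1 - lam / Λ) / 4 * (4 * ‖w‖ ^ 2) := by
              apply mul_le_mul_of_nonneg_left hx2; positivity
          _ = (1 - lam / Λ) * (γ * ‖w‖ ^ 2) := by ring
          _ ≤ (1 - lam / Λ) * ⟪A w, w⟫ := by
              apply mul_le_mul_of_nonneg_left hAw hcoef.le
          _ ≤ ⟪A w, w⟫ - lam * ⟪C w, w⟫ := hlow
  · -- upper bound
    have h := (hA x).2
    rw [inner_sub_left, real_inner_smul_left]
    nlinarith
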